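/- Let n ≥ 1 and f_1,...,f_n ∈ ℚ[x_1,...,x_n]. For each k ∈ {1,...,n}, the Bezout polynomials satisfy δ(x_k) ≡ x_k·δ(1) modulo the ideal of R = ℚ[x_1,...,x_n,y_1,...,y_n] generated by f_1,...,f_n (regarded as polynomials in the x-variables); that is, det Δ(x_k) - x_k·det Δ(1) lies in the ideal ⟨f_1(x),...,f_n(x)⟩ of R. -/

import Mathlib

open MvPolynomial

/-- For each `k`, the Bezout polynomials satisfy `δ(x_k) ≡ x_k·δ(1)` modulo the ideal of
`R = ℚ[x₁,…,xₙ,y₁,…,yₙ]` generated by `f₁(x),…,fₙ(x)`; i.e.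
`det Δ(x_k) - x_k·det Δ(1) ∈ ⟨f₁(x),…,fₙ(x)⟩`. (The `x`-variables are indexed by
`Sum.inl` and the `y`-variables by `Sum.inr`; `Δ(1)` and `Δ(x_k)` are given by their
defining equations.) -/
theorem stmt_13 (n : ℕ) (hn : 1 ≤ n) (f : Fin n → MvPolynomial (Fin n) ℚ) (k : Fin n)
    (D0 Dk : Matrix (Fin n) (Fin n) (MvPolynomial (Fin n ⊕ Fin n) ℚ))
    (hD0 : ∀ i j : Fin n,
      (X (Sum.inl j) - X (Sum.inr j)) * D0 i j =
        (aeval (fun t : Fin n =>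
          if (t : ℕ) < (j : ℕ) then (X (Sum.inr t) : MvPolynomial (Fin n ⊕ Fin n) ℚ)
          else X (Sum.inl t)) (f i))
        - (aeval (fun t : Fin n =>
          if (t : ℕ) ≤ (j : ℕ) then (X (Sum.inr t) : MvPolynomial (Fin n ⊕ Fin n) ℚ)
          else X (Sum.inl t)) (f i)))
    (hDk : ∀ i j : Fin n,
      (X (Sum.inl j) - X (Sum.inr j)) * Dk i j =
        (X (Sum.inr j)) ^ (if j = k then 1 else 0) *
          (aeval (fun t : Fin n =>
            if (t : ℕ) < (j : ℕ) then (X (Sum.inr t) : MvPolynomial (Fin n ⊕ Fin n) ℚ)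
            else X (Sum.inl t)) (f i))
        - (X (Sum.inl j)) ^ (if j = k then 1 else 0) *
          (aeval (fun t : Fin n =>
            if (t : ℕ) ≤ (j : ℕ) then (X (Sum.inr t) : MvPolynomial (Fin n ⊕ Fin n) ℚ)
            else X (Sum.inl t)) (f i))) :
    Dk.det - X (Sum.inl k) * D0.det ∈
      Ideal.span (Set.range fun i : Fin n => rename Sum.inl (f i)) := by
  classical
  -- nonzero divisors
  have hne : ∀ j : Fin n,
      (X (Sum.inl j) - X (Sum.inr j) : MvPolynomial (Fin n ⊕ Fin n) ℚ) ≠ 0 := by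
    intro j h
    have h2 : (X (Sum.inl j) : MvPolynomial (Fin n ⊕ Fin n) ℚ) = X (Sum.inr j) :=
      sub_eq_zero.mp h
    have := X_injective h2
    simp at this
  -- the telescoping family
  set φ : Fin n → ℕ → MvPolynomial (Fin n ⊕ Fin n) ℚ := fun i m =>
    aeval (fun t : Fin n =>
      if (t : ℕ) < m then (X (Sum.inr t) : MvPolynomial (Fin n ⊕ Fin n) ℚ)
      else X (Sum.inl t)) (f i) with hφdef
  have hφ0 : ∀ i, φ i 0 = rename Sum.inl (f i) := by
    intro i
    have hfn : (fun t : Fin n =>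
        if (t : ℕ) < 0 then (X (Sum.inr t) : MvPolynomial (Fin n ⊕ Fin n) ℚ)
        else X (Sum.inl t)) = (X ∘ Sum.inl) := by
      funext t; simp [Function.comp]
    show aeval _ (f i) = _
    rw [hfn, rename_eq_aeval]
  have hstep : ∀ i (j : Fin n),
      (X (Sum.inl j) - X (Sum.inr j)) * D0 i j = φ i (j : ℕ) - φ i ((j : ℕ) + 1) := by
    intro i j
    rw [hD0 i j]
    have hfn : (fun t : Fin n =>
        if (t : ℕ) ≤ (j : ℕ) then (X (Sum.inr t) : MvPolynomial (Fin n ⊕ Fin n) ℚ)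
        else X (Sum.inl t)) = (fun t : Fin n =>
        if (t : ℕ) < (j : ℕ) + 1 then (X (Sum.inr t) : MvPolynomial (Fin n ⊕ Fin n) ℚ)
        else X (Sum.inl t)) := by
      funext t; simp [Nat.lt_succ_iff]
    rw [hfn]
  -- telescoping sum
  have htel : ∀ i, φ i (k : ℕ) =
      rename Sum.inl (f i) - ∑ m ∈ Finset.range (k : ℕ), (φ i m - φ i (m + 1)) := by
    intro i
    rw [Finset.sum_range_sub' (φ i), hφ0 i]
    ring
  -- identify Dk
  have hDkEq : Dk = Matrix.updateCol D0 k
      (fun i => X (Sum.inl k) * D0 i k - φ i (k : ℕ)) := by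
    apply Matrix.ext
    intro i j
    rw [Matrix.updateCol_apply]
    by_cases hj : j = k
    · subst hj
      rw [if_pos rfl]
      apply mul_left_cancel₀ (hne j)
      rw [hDk i j]
      simp only [eq_self_iff_true, if_true, pow_one]
      linear_combination (-(X (Sum.inl j) : MvPolynomial (Fin n ⊕ Fin n) ℚ)) * hD0 i j
    · rw [if_neg hj]
      apply mul_left_cancel₀ (hne j)
      rw [hDk i j, hD0 i j]
      simp [hj]
  -- determinant is additive in a column-sum
  have col_sum : ∀ (M : Matrix (Fin n) (Fin n) (MvPolynomial (Fin n ⊕ Fin n) ℚ))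
      (j : Fin n) (s : Finset ℕ) (c : ℕ → Fin n → MvPolynomial (Fin n ⊕ Fin n) ℚ),
      Matrix.det (M.updateCol j (fun i => ∑ m ∈ s, c m i)) =
        ∑ m ∈ s, Matrix.det (M.updateCol j (c m)) := by
    intro M j s c
    induction s using Finset.induction with
    | empty =>
      have h0 : (fun _ : Fin n => (0 : MvPolynomial (Fin n ⊕ Fin n) ℚ)) =
          (0 : MvPolynomial (Fin n ⊕ Fin n) ℚ) •
            (fun _ : Fin n => (0 : MvPolynomial (Fin n ⊕ Fin n) ℚ)) := by
        funext t; simp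
      simp only [Finset.sum_empty]
      rw [h0, Matrix.det_updateCol_smul, zero_mul]
    | insert a s ha ih =>
      have hsplit : (fun i => ∑ m ∈ insert a s, c m i) =
          (c a) + (fun i => ∑ m ∈ s, c m i) := by
        funext i
        simp [Finset.sum_insert ha]
      rw [hsplit, Matrix.det_updateCol_add, ih, Finset.sum_insert ha]
  -- the sum part vanishes
  have hvanish : Matrix.det (D0.updateCol k
      (fun i => ∑ m ∈ Finset.range (k : ℕ), (φ i m - φ i (m + 1)))) = 0 := by
    rw [col_sum D0 k (Finset.range (k : ℕ)) (fun m i => φ i m - φ i (m + 1))]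
    refine Finset.sum_eq_zero fun m hm => ?_
    have hmk : m < (k : ℕ) := Finset.mem_range.mp hm
    have hmn : m < n := hmk.trans k.isLt
    set j : Fin n := ⟨m, hmn⟩ with hjdef
    have hjk : j ≠ k := Fin.ne_of_val_ne (Nat.ne_of_lt hmk)
    have hc : (fun i => φ i m - φ i (m + 1)) =
        (X (Sum.inl j) - X (Sum.inr j) : MvPolynomial (Fin n ⊕ Fin n) ℚ) •
          (fun i => D0 i j) := by
      funext i
      rw [Pi.smul_apply, smul_eq_mul, hstep i j]
    rw [hc, Matrix.det_updateCol_smul, Matrix.det_updateCol_eq_zero hjk, mul_zero]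
  -- main determinant identity
  have hF : Matrix.det Dk - X (Sum.inl k) * Matrix.det D0 =
      - Matrix.det (D0.updateCol k (fun i => rename Sum.inl (f i))) := by
    have e1 : (fun i => X (Sum.inl k) * D0 i k - φ i (k : ℕ)) =
        (fun i => X (Sum.inl k) * D0 i k) +
          (-1 : MvPolynomial (Fin n ⊕ Fin n) ℚ) • (fun i => φ i (k : ℕ)) := by
      funext i; simp; ring
    have e2 : (fun i => (X (Sum.inl k) : MvPolynomial (Fin n ⊕ Fin n) ℚ) * D0 i k) =
        (X (Sum.inl k) : MvPolynomial (Fin n ⊕ Fin n) ℚ) • (fun i => D0 i k) := by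
      funext i; simp
    have e3 : (fun i => φ i (k : ℕ)) =
        (fun i => rename Sum.inl (f i)) + (-1 : MvPolynomial (Fin n ⊕ Fin n) ℚ) •
          (fun i => ∑ m ∈ Finset.range (k : ℕ), (φ i m - φ i (m + 1))) := by
      funext i
      simp only [Pi.add_apply, Pi.smul_apply, smul_eq_mul, htel i]
      ring
    rw [hDkEq, e1, Matrix.det_updateCol_add, e2, Matrix.det_updateCol_smul,
      Matrix.det_updateCol_smul, Matrix.updateCol_eq_self,
      e3, Matrix.det_updateCol_add, Matrix.det_updateCol_smul, hvanish]
    ring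
  rw [hF]
  refine neg_mem ?_
  rw [Matrix.det_eq_sum_mul_adjugate_col]
  refine Ideal.sum_mem _ fun i _ => ?_
  rw [Matrix.updateCol_self]
  refine Ideal.mul_mem_right _ _ ?_
  exact Ideal.subset_span ⟨i, rfl⟩
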